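/- Let F be a field, let M be a p×q matrix over F, and let E be a p×q matrix in row reduced echelon form that is row equivalent to M. Then the number of pivot columns of E equals the dimension of the column space of M (the rank of M). -/

import Mathlib

open Matrix

/-- `E.IsPivot i j` : sweeping row `i` of `E` from the left, the first nonzero
entry is met at column `j` (i.e. `E i j ≠ 0` and all entries to its left vanish). -/
def Matrix.IsPivot {F : Type*} [Field F] {p q : ℕ}
    (E : Matrix (Fin p) (Fin q) F) (i : Fin p) (j : Fin q) : Prop :=
  E i j ≠ 0 ∧ ∀ j' : Fin q, j' < j → E i j' = 0

/-- `E` is in row reduced echelon form: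
(1) the first nonzero entry of every nonzero row is `1`;
(2) a pivot is the only nonzero entry of its column;
(3) a pivot in a lower row lies in a column strictly to the right;
(4) zero rows are at the bottom. -/
def Matrix.IsRREF {F : Type*} [Field F] {p q : ℕ}
    (E : Matrix (Fin p) (Fin q) F) : Prop :=
  (∀ i j, E.IsPivot i j → E i j = 1) ∧
  (∀ i j, E.IsPivot i j → ∀ i' : Fin p, i' ≠ i → E i' j = 0) ∧
  (∀ i₁ j₁ i₂ j₂, E.IsPivot i₁ j₁ → E.IsPivot i₂ j₂ → i₁ < i₂ → j₁ < j₂) ∧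
  (∀ i i' : Fin p, i ≤ i' → (∀ j, E i j = 0) → ∀ j, E i' j = 0)

/-- Two `p × q` matrices are row equivalent iff one is obtained from the
other by left multiplication by an invertible `p × p` matrix. -/
def Matrix.RowEquiv {F : Type*} [Field F] {p q : ℕ}
    (M N : Matrix (Fin p) (Fin q) F) : Prop :=
  ∃ P : Matrix (Fin p) (Fin p) F, IsUnit P ∧ N = P * M

open scoped Classical in
/-- A row with no pivot is a zero row. -/
lemma Matrix.row_eq_zero_of_no_pivot {F : Type*} [Field F] {p q : ℕ}
    (E : Matrix (Fin p) (Fin q) F) (i : Fin p) (h : ¬ ∃ j, E.IsPivot i j) :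
    ∀ j, E i j = 0 := by
  by_contra hne
  push_neg at hne
  obtain ⟨j0, hj0⟩ := hne
  set s : Finset (Fin q) := Finset.univ.filter (fun j => E i j ≠ 0) with hs
  have hsne : s.Nonempty := ⟨j0, by simp [hs, hj0]⟩
  refine h ⟨s.min' hsne, ?_, ?_⟩
  · have := s.min'_mem hsne
    simpa [hs] using this
  · intro j' hj'
    by_contra hj'ne
    exact absurd (s.min'_le j' (by simp [hs, hj'ne])) (not_le.mpr hj')

set_option maxHeartbeats 1000000 in
open scoped Classical in
/-- The number of pivot columns of the RREF of `M` is the dimension of the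
column space of `M`, i.e. the rank of `M`. -/
theorem card_pivot_columns_eq_rank {F : Type*} [Field F] {p q : ℕ}
    (M E : Matrix (Fin p) (Fin q) F)
    (hE : E.IsRREF) (hME : M.RowEquiv E) :
    (Finset.univ.filter fun j : Fin q => ∃ i : Fin p, E.IsPivot i j).card =
      Module.finrank F (Submodule.span F (Set.range Mᵀ)) := by
  obtain ⟨P, hP, hPME⟩ := hME
  obtain ⟨h1, h2, h3, h4⟩ := hE
  -- uniqueness of the pivot in a row
  have rowUnique : ∀ i j j', E.IsPivot i j → E.IsPivot i j' → j = j' := by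
    intro i j j' hj hj'
    rcases lt_trichotomy j j' with h | h | h
    · exact absurd (hj'.2 j h) hj.1
    · exact h
    · exact absurd (hj.2 j' h) hj'.1
  -- uniqueness of the pivot in a column
  have colUnique : ∀ i i' j, E.IsPivot i j → E.IsPivot i' j → i = i' := by
    intro i i' j hj hj'
    by_contra hne
    exact hj.1 (h2 i' j hj' i hne)
  -- a pivot column is a standard basis vector
  have colSingle : ∀ i j, E.IsPivot i j → Eᵀ j = Pi.single i (1 : F) := by
    intro i j hij
    funext i'
    by_cases h : i' = i
    · subst h; simp [Matrix.transpose_apply, h1 i' j hij]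
    · simp [Matrix.transpose_apply, h2 i j hij i' h, Pi.single_apply, h]
  set S : Finset (Fin p) := Finset.univ.filter (fun i => ∃ j, E.IsPivot i j) with hS
  set T : Finset (Fin q) := Finset.univ.filter (fun j => ∃ i, E.IsPivot i j) with hT
  -- the cardinality bijection between pivot columns and pivot rows
  have hcard : T.card = S.card := by
    refine Finset.card_bij (fun j hj => Classical.choose (by simpa [hT] using hj :
        ∃ i, E.IsPivot i j)) ?_ ?_ ?_
    · intro j hj
      have := Classical.choose_spec (by simpa [hT] using hj : ∃ i, E.IsPivot i j)
      simp only [hS, Finset.mem_filter, Finset.mem_univ, true_and]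
      exact ⟨j, this⟩
    · intro j hj j' hj' heq
      have h₁ := Classical.choose_spec (by simpa [hT] using hj : ∃ i, E.IsPivot i j)
      have h₂ := Classical.choose_spec (by simpa [hT] using hj' : ∃ i, E.IsPivot i j')
      rw [heq] at h₁
      exact rowUnique _ j j' h₁ h₂
    · intro i hi
      obtain ⟨j, hij⟩ : ∃ j, E.IsPivot i j := by simpa [hS] using hi
      have hjT : j ∈ T := by simp only [hT, Finset.mem_filter, Finset.mem_univ, true_and]; exact ⟨i, hij⟩
      refine ⟨j, hjT, ?_⟩
      have := Classical.choose_spec (by simpa [hT] using hjT : ∃ i, E.IsPivot i j)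
      exact colUnique _ i j this hij
  -- the column space of E is spanned by the standard vectors indexed by pivot rows
  have hspan : Submodule.span F (Set.range Eᵀ) =
      Submodule.span F ((fun i => Pi.single i (1 : F)) '' ↑S) := by
    apply le_antisymm
    · rw [Submodule.span_le]
      rintro v ⟨j, rfl⟩
      have hv : Eᵀ j = ∑ i ∈ S, E i j • (Pi.single i 1 : Fin p → F) := by
        funext i'
        rw [Finset.sum_apply]
        have : ∀ i ∈ S, (E i j • (Pi.single i 1 : Fin p → F)) i'
            = if i' = i then E i j else 0 := by
          intro i _
          simp [Pi.single_apply, mul_ite]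
        rw [Finset.sum_congr rfl this, Finset.sum_ite_eq S i' (fun i => E i j)]
        by_cases h : i' ∈ S
        · simp [h, Matrix.transpose_apply]
        · have hz : ∀ j, E i' j = 0 :=
            Matrix.row_eq_zero_of_no_pivot E i' (by simpa [hS] using h)
          simp [h, Matrix.transpose_apply, hz j]
      rw [hv]
      exact Submodule.sum_mem _ fun i hi => Submodule.smul_mem _ _
        (Submodule.subset_span ⟨i, hi, rfl⟩)
    · rw [Submodule.span_le]
      rintro v ⟨i, hi, rfl⟩
      obtain ⟨j, hij⟩ : ∃ j, E.IsPivot i j := by simpa [hS] using hi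
      exact Submodule.subset_span ⟨j, (colSingle i j hij).symm ▸ rfl⟩
  -- linear independence of the standard vectors
  have hli : LinearIndependent F (fun i : Fin p => Pi.single i (1 : F)) := by
    have := (Pi.basisFun F (Fin p)).linearIndependent
    convert this using 1
    funext i
    simp [Pi.basisFun_apply]
  have hinj : Function.Injective (fun i : Fin p => Pi.single i (1 : F)) :=
    hli.injective
  -- finrank of the span of the pivot standard vectors
  have himg : (fun i : Fin p => Pi.single i (1 : F)) '' ↑S
      = ↑(S.image (fun i => Pi.single i (1 : F))) := by simp [Finset.coe_image]
  have hfr : Module.finrank F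
      (Submodule.span F ((fun i : Fin p => Pi.single i (1 : F)) '' ↑S)) = S.card := by
    have h' : LinearIndependent F fun x : ((fun i : Fin p => Pi.single i (1 : F)) '' ↑S) => (x : Fin p → F) :=
      LinearIndepOn.id_image (show LinearIndepOn F (fun i : Fin p => Pi.single i (1 : F)) (↑S : Set (Fin p)) from
        hli.comp ((↑) : ↥(↑S : Set (Fin p)) → Fin p) Subtype.val_injective)
    rw [← Finset.coe_image] at h'
    have hfin := finrank_span_finset_eq_card (s := S.image (fun i => Pi.single i (1 : F))) h'
    rw [himg, hfin, Finset.card_image_of_injective _ hinj]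
  -- put everything together using rank invariance under row equivalence
  have hPdet : IsUnit P.det := (Matrix.isUnit_iff_isUnit_det P).mp hP
  have hrank : Module.finrank F (Submodule.span F (Set.range Mᵀ)) = E.rank := by
    rw [hPME, Matrix.rank_mul_eq_right_of_isUnit_det P M hPdet,
      Matrix.rank_eq_finrank_span_cols]
    rfl
  rw [hrank, Matrix.rank_eq_finrank_span_cols, show E.col = Eᵀ from rfl, hspan, hfr, hcard]
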